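/- Let (D(M), ρ_α, ω) be a symplectic Lie-Rinehart-Jacobi algebra structure on D(M), i.e. α : D(M) → C^∞(M) is C^∞(M)-linear with δα = (δ1)∧α, and ω is a nondegenerate alternating bilinear form with δω = -α∧ω. Then (1 + α(1))·ω = δ_α(i_1ω), where δ_α η = δη + α∧η. -/

import Mathlib

open LinearMap

set_option linter.unusedSectionVars false
set_option linter.unusedVariables false

section Prelim

variable (K A : Type*) [Field K] [CharZero K] [CommRing A] [Algebra K A]

/-- A differential operator of order at most 1 on `A`. -/
def IsDiff1 (φ : A →ₗ[K] A) : Prop :=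
  ∀ a b : A, φ (a * b) = a * φ b + b * φ a - a * b * φ 1

variable {K A}

/-- The commutator bracket of two endomorphisms. -/
def opBracket (φ ψ : A →ₗ[K] A) : A →ₗ[K] A := φ ∘ₗ ψ - ψ ∘ₗ φ

theorem isDiff1_mulLeft (f : A) : IsDiff1 K A (LinearMap.mulLeft K f) := by
  intro a b; simp only [LinearMap.mulLeft_apply, mul_one]; ring

theorem IsDiff1.opBracket {φ ψ : A →ₗ[K] A} (hφ : IsDiff1 K A φ) (hψ : IsDiff1 K A ψ) :
    IsDiff1 K A (_root_.opBracket φ ψ) := by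
  intro a b
  simp only [_root_.opBracket, LinearMap.sub_apply, LinearMap.comp_apply]
  rw [hψ a b, hφ a b]
  simp only [map_add, map_sub]
  rw [hφ a (ψ b), hφ b (ψ a), hφ (a * b) (ψ 1), hψ a (φ b), hψ b (φ a), hψ (a * b) (φ 1),
    hφ a b, hψ a b]
  ring

variable (K A) in
/-- The `A`-module `Diff_K(A)` of differential operators of order at most 1 on `A`. -/
def Diff1 : Submodule A (A →ₗ[K] A) where
  carrier := {φ | IsDiff1 K A φ}
  add_mem' := by
    intro φ ψ hφ hψ a b
    simp only [LinearMap.add_apply, hφ a b, hψ a b]; ring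
  zero_mem' := by intro a b; simp
  smul_mem' := by
    intro c φ hφ a b
    simp only [LinearMap.smul_apply, smul_eq_mul, hφ a b]; ring

/-- The commutator bracket on `Diff1`. -/
def Diff1.bk (φ ψ : Diff1 K A) : Diff1 K A :=
  ⟨opBracket φ.1 ψ.1, IsDiff1.opBracket φ.2 ψ.2⟩

variable (K) in
/-- The multiplication operator by `f`, as a differential operator of order `≤ 1`. -/
def Diff1.const (f : A) : Diff1 K A := ⟨LinearMap.mulLeft K f, isDiff1_mulLeft f⟩

/-- Evaluation at the unit: the linear form `δ1 : φ ↦ φ(1)` on `Diff1`. -/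
def ev1 : Diff1 K A →ₗ[A] A where
  toFun φ := φ.1 1
  map_add' φ ψ := rfl
  map_smul' c φ := rfl

end Prelim

section Mfd

open scoped Manifold

local notation "∞" => (⊤ : ℕ∞)

variable {EM : Type*} [NormedAddCommGroup EM] [NormedSpace ℝ EM]
  {HM : Type*} [TopologicalSpace HM] {I : ModelWithCorners ℝ EM HM}
  {M : Type*} [TopologicalSpace M] [ChartedSpace HM M] [IsManifold I (⊤ : ℕ∞) M]

set_option maxHeartbeats 2000000 in
theorem stmt12 (α : Diff1 ℝ C^∞⟮I, M; ℝ⟯ →ₗ[C^∞⟮I, M; ℝ⟯] C^∞⟮I, M; ℝ⟯)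
    (hα : ∀ φ ψ : Diff1 ℝ C^∞⟮I, M; ℝ⟯,
      φ.1 (α ψ) - ψ.1 (α φ) - α (Diff1.bk φ ψ) = φ.1 1 * α ψ - ψ.1 1 * α φ)
    (ω : Diff1 ℝ C^∞⟮I, M; ℝ⟯ →ₗ[C^∞⟮I, M; ℝ⟯] Diff1 ℝ C^∞⟮I, M; ℝ⟯ →ₗ[C^∞⟮I, M; ℝ⟯] C^∞⟮I, M; ℝ⟯)
    (halt : ∀ φ : Diff1 ℝ C^∞⟮I, M; ℝ⟯, ω φ φ = 0) (hbij : Function.Bijective ω)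
    (hδω : ∀ φ ψ χ : Diff1 ℝ C^∞⟮I, M; ℝ⟯,
      ((φ).1 (ω ψ χ) - (ψ).1 (ω φ χ) + (χ).1 (ω φ ψ) - (ω (Diff1.bk φ ψ) χ) + (ω (Diff1.bk φ χ) ψ) - (ω (Diff1.bk ψ χ) φ)) =
        -(α φ * ω ψ χ - α ψ * ω φ χ + α χ * ω φ ψ)) :
    ∀ φ ψ : Diff1 ℝ C^∞⟮I, M; ℝ⟯,
      (1 + α (Diff1.const ℝ (1 : C^∞⟮I, M; ℝ⟯))) * ω φ ψ =
        (φ.1 (ω (Diff1.const ℝ (1 : C^∞⟮I, M; ℝ⟯)) ψ) - ψ.1 (ω (Diff1.const ℝ (1 : C^∞⟮I, M; ℝ⟯)) φ) - ω (Diff1.const ℝ (1 : C^∞⟮I, M; ℝ⟯)) (Diff1.bk φ ψ)) +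
          (α φ * ω (Diff1.const ℝ (1 : C^∞⟮I, M; ℝ⟯)) ψ - α ψ * ω (Diff1.const ℝ (1 : C^∞⟮I, M; ℝ⟯)) φ) := by
  intro φ ψ
  set c : Diff1 ℝ C^∞⟮I, M; ℝ⟯ := Diff1.const ℝ (1 : C^∞⟮I, M; ℝ⟯) with hc
  have hcval : ∀ x : C^∞⟮I, M; ℝ⟯, c.1 x = x := by
    intro x; simp [hc, Diff1.const, LinearMap.mulLeft_apply]
  have hbkc : ∀ χ : Diff1 ℝ C^∞⟮I, M; ℝ⟯, Diff1.bk c χ = 0 := by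
    intro χ
    apply Subtype.ext
    apply LinearMap.ext
    intro x
    simp [Diff1.bk, opBracket, Diff1.const, hc, LinearMap.mulLeft_apply]
  have hanti : ∀ a b : Diff1 ℝ C^∞⟮I, M; ℝ⟯, ω a b = -ω b a := by
    intro a b
    have h := halt (a + b)
    simp only [map_add, LinearMap.add_apply, halt a, halt b] at h
    linear_combination h
  have h := hδω c φ ψ
  rw [hcval, hbkc φ, hbkc ψ] at h
  simp only [map_zero, LinearMap.zero_apply] at h
  rw [hanti (Diff1.bk φ ψ) c] at h
  linear_combination h
end Mfd
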